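/- For the sets A_{2l} and B_{2l} from the construction with parameter l (which satisfy A_{2l} ∪ B_{2l} = [0, 2^{2l+1}−2] and A_{2l} ∩ B_{2l} = {2^{2l}−1}), one has R_{A_{2l}} = R_{B_{2l}}; i.e., there exist finite sets A, B covering an initial interval, intersecting in exactly one point, which have identical representation functions. -/

import Mathlib

/-- Representation function: number of unordered representations of `n`
as `s' + s''` with `s' < s''`, both in `S`. -/
noncomputable def R (S : Set ℕ) (n : ℕ) : ℕ :=
  {p : ℕ × ℕ | p.1 ∈ S ∧ p.2 ∈ S ∧ p.1 < p.2 ∧ p.1 + p.2 = n}.ncard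

/-- Translate of a set: `m + S`. -/
def tr (m : ℕ) (S : Set ℕ) : Set ℕ := (m + ·) '' S


/-- Iterated construction: `A_{i+1} = A_i ∪ (m_i + B_i)`, `B_{i+1} = B_i ∪ (m_i + A_i)`. -/
def AB (A0 B0 : Set ℕ) (m : ℕ → ℕ) : ℕ → Set ℕ × Set ℕ
  | 0 => (A0, B0)
  | i + 1 => ((AB A0 B0 m i).1 ∪ tr (m i) (AB A0 B0 m i).2,
              (AB A0 B0 m i).2 ∪ tr (m i) (AB A0 B0 m i).1)


/-- The sequence `m_i` from the paper, with parameter `l`. -/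
def mseq (l i : ℕ) : ℕ :=
  if i ≤ 2*l - 2 then 2^(i+1)
  else if i = 2*l - 1 then 2^(2*l) - 1
  else 2^(i+1) - 2^(i - 2*l)

/-! ### Auxiliary machinery -/

lemma mem_tr {m x : ℕ} {S : Set ℕ} : x ∈ tr m S ↔ ∃ b, b ∈ S ∧ m + b = x := by
  simp [tr]

def Pn (S : Set ℕ) (n : ℕ) : Set (ℕ × ℕ) :=
  {p | p.1 ∈ S ∧ p.2 ∈ S ∧ p.1 < p.2 ∧ p.1 + p.2 = n}

lemma R_eq (S : Set ℕ) (n : ℕ) : R S n = (Pn S n).ncard := rfl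

def Cross (X Y : Set ℕ) (n : ℕ) : Set (ℕ × ℕ) :=
  {p | p.1 ∈ X ∧ p.2 ∈ Y ∧ p.1 + p.2 = n}

lemma Pn_finite (S : Set ℕ) (n : ℕ) : (Pn S n).Finite := by
  apply Set.Finite.subset ((Set.finite_Iic n).prod (Set.finite_Iic n))
  rintro ⟨a, b⟩ ⟨_, _, _, h⟩
  exact ⟨Set.mem_Iic.2 (by omega), Set.mem_Iic.2 (by omega)⟩

lemma Cross_finite (X Y : Set ℕ) (n : ℕ) : (Cross X Y n).Finite := by
  apply Set.Finite.subset ((Set.finite_Iic n).prod (Set.finite_Iic n))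
  rintro ⟨a, b⟩ ⟨_, _, h⟩
  exact ⟨Set.mem_Iic.2 (by omega), Set.mem_Iic.2 (by omega)⟩

lemma R_singleton (a n : ℕ) : R {a} n = 0 := by
  rw [R_eq, Set.ncard_eq_zero (Pn_finite _ _)]
  rw [Set.eq_empty_iff_forall_notMem]
  rintro ⟨x, y⟩ ⟨hx, hy, hlt, _⟩
  simp only [Set.mem_singleton_iff] at hx hy
  omega

lemma R_union (A B : Set ℕ) (m : ℕ) (hA : ∀ a ∈ A, ∀ b ∈ B, a < m + b) (n : ℕ) :
    R (A ∪ tr m B) n = R A n + R (tr m B) n + (Cross A (tr m B) n).ncard := by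
  have hlt : ∀ a ∈ A, ∀ t ∈ tr m B, a < t := by
    intro a ha t ht
    obtain ⟨b, hb, rfl⟩ := mem_tr.1 ht
    exact hA a ha b hb
  have hdisj : ∀ x, x ∈ A → x ∈ tr m B → False := fun x hx ht =>
    lt_irrefl x (hlt x hx x ht)
  have hset : Pn (A ∪ tr m B) n = (Pn A n ∪ Pn (tr m B) n) ∪ Cross A (tr m B) n := by
    ext ⟨a, b⟩
    constructor
    · rintro ⟨h1, h2, h3, h4⟩
      rcases h1 with h1 | h1 <;> rcases h2 with h2 | h2
      · exact Or.inl (Or.inl ⟨h1, h2, h3, h4⟩)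
      · exact Or.inr ⟨h1, h2, h4⟩
      · exact absurd (hlt _ h2 _ h1) (by omega)
      · exact Or.inl (Or.inr ⟨h1, h2, h3, h4⟩)
    · rintro ((⟨h1, h2, h3, h4⟩ | ⟨h1, h2, h3, h4⟩) | ⟨h1, h2, h4⟩)
      · exact ⟨Or.inl h1, Or.inl h2, h3, h4⟩
      · exact ⟨Or.inr h1, Or.inr h2, h3, h4⟩
      · exact ⟨Or.inl h1, Or.inr h2, hlt _ h1 _ h2, h4⟩
  have d1 : Disjoint (Pn A n) (Pn (tr m B) n) := by
    rw [Set.disjoint_left]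
    rintro ⟨a, b⟩ ⟨h1, _, _, _⟩ ⟨h1', _, _, _⟩
    exact hdisj a h1 h1'
  have d2 : Disjoint (Pn A n ∪ Pn (tr m B) n) (Cross A (tr m B) n) := by
    rw [Set.disjoint_left]
    rintro ⟨a, b⟩ (⟨_, h2, _, _⟩ | ⟨h1, _, _, _⟩) ⟨hc1, hc2, _⟩
    · exact hdisj b h2 hc2
    · exact hdisj a hc1 h1
  rw [R_eq, hset,
    Set.ncard_union_eq d2 ((Pn_finite _ _).union (Pn_finite _ _)) (Cross_finite _ _ _),
    Set.ncard_union_eq d1 (Pn_finite _ _) (Pn_finite _ _), R_eq, R_eq]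

lemma cross_swap (A B : Set ℕ) (m n : ℕ) :
    (Cross A (tr m B) n).ncard = (Cross B (tr m A) n).ncard := by
  have himg : (fun p : ℕ × ℕ => (p.2 - m, p.1 + m)) '' Cross A (tr m B) n
      = Cross B (tr m A) n := by
    ext ⟨x, y⟩
    constructor
    · rintro ⟨⟨a, t⟩, ⟨ha, ht, hsum⟩, heq⟩
      obtain ⟨b, hb, hbe⟩ := mem_tr.1 ht
      have h1 : t - m = x := congrArg Prod.fst heq
      have h2 : a + m = y := congrArg Prod.snd heq
      have hx : x = b := by omega
      have hy : y = m + a := by omega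
      subst hx; subst hy
      exact ⟨hb, mem_tr.2 ⟨a, ha, rfl⟩, by omega⟩
    · rintro ⟨hx, ht, hsum⟩
      obtain ⟨a, ha, hae⟩ := mem_tr.1 ht
      refine ⟨(a, m + x), ⟨ha, mem_tr.2 ⟨x, hx, rfl⟩, by omega⟩, ?_⟩
      exact Prod.ext_iff.2 ⟨show m + x - m = x by omega, show a + m = y by omega⟩
  have hinj : Set.InjOn (fun p : ℕ × ℕ => (p.2 - m, p.1 + m)) (Cross A (tr m B) n) := by
    rintro ⟨a, t⟩ ⟨ha, ht, _⟩ ⟨a', t'⟩ ⟨ha', ht', _⟩ heq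
    obtain ⟨b, hb, hbe⟩ := mem_tr.1 ht
    obtain ⟨b', hb', hbe'⟩ := mem_tr.1 ht'
    have h1 : t - m = t' - m := congrArg Prod.fst heq
    have h2 : a + m = a' + m := congrArg Prod.snd heq
    exact Prod.ext_iff.2 ⟨show a = a' by omega, show t = t' by omega⟩
  rw [← himg, Set.ncard_image_of_injOn hinj]

lemma R_tr_of_le (S : Set ℕ) (m n : ℕ) (h : 2 * m ≤ n) :
    R (tr m S) n = R S (n - 2 * m) := by
  have himg : (fun p : ℕ × ℕ => (p.1 - m, p.2 - m)) '' Pn (tr m S) n = Pn S (n - 2 * m) := by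
    ext ⟨x, y⟩
    constructor
    · rintro ⟨⟨a, b⟩, ⟨hta, htb, hlt, hsum⟩, heq⟩
      obtain ⟨a', ha', hae⟩ := mem_tr.1 hta
      obtain ⟨b', hb', hbe⟩ := mem_tr.1 htb
      have h1 : a - m = x := congrArg Prod.fst heq
      have h2 : b - m = y := congrArg Prod.snd heq
      have hx : x = a' := by omega
      have hy : y = b' := by omega
      subst hx; subst hy
      exact ⟨ha', hb', by omega, by omega⟩
    · rintro ⟨hx, hy, hlt, hsum⟩
      refine ⟨(m + x, m + y),
        ⟨mem_tr.2 ⟨x, hx, rfl⟩, mem_tr.2 ⟨y, hy, rfl⟩, by omega, by omega⟩, ?_⟩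
      exact Prod.ext_iff.2 ⟨show m + x - m = x by omega, show m + y - m = y by omega⟩
  have hinj : Set.InjOn (fun p : ℕ × ℕ => (p.1 - m, p.2 - m)) (Pn (tr m S) n) := by
    rintro ⟨a, b⟩ ⟨hta, htb, _, _⟩ ⟨c, d⟩ ⟨htc, htd, _, _⟩ heq
    obtain ⟨a', ha', hae⟩ := mem_tr.1 hta
    obtain ⟨b', hb', hbe⟩ := mem_tr.1 htb
    obtain ⟨c', hc', hce⟩ := mem_tr.1 htc
    obtain ⟨d', hd', hde⟩ := mem_tr.1 htd
    have h1 : a - m = c - m := congrArg Prod.fst heq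
    have h2 : b - m = d - m := congrArg Prod.snd heq
    exact Prod.ext_iff.2 ⟨show a = c by omega, show b = d by omega⟩
  rw [R_eq, R_eq, ← himg, Set.ncard_image_of_injOn hinj]

lemma R_tr_of_lt (S : Set ℕ) (m n : ℕ) (h : n < 2 * m) : R (tr m S) n = 0 := by
  rw [R_eq, Set.ncard_eq_zero (Pn_finite _ _), Set.eq_empty_iff_forall_notMem]
  rintro ⟨x, y⟩ ⟨hx, hy, hlt, hsum⟩
  obtain ⟨a, ha, hae⟩ := mem_tr.1 hx
  obtain ⟨b, hb, hbe⟩ := mem_tr.1 hy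
  omega

lemma R_tr_congr (S S' : Set ℕ) (m n : ℕ) (hR : R S = R S') :
    R (tr m S) n = R (tr m S') n := by
  rcases le_or_gt (2 * m) n with h | h
  · rw [R_tr_of_le S m n h, R_tr_of_le S' m n h, hR]
  · rw [R_tr_of_lt S m n h, R_tr_of_lt S' m n h]

lemma step_lemma (A B : Set ℕ) (m : ℕ)
    (hA : ∀ a ∈ A, ∀ b ∈ B, a < m + b)
    (hB : ∀ b ∈ B, ∀ a ∈ A, b < m + a)
    (hR : R A = R B) :
    R (A ∪ tr m B) = R (B ∪ tr m A) := by
  funext n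
  rw [R_union A B m hA n, R_union B A m hB n, cross_swap A B m n,
    R_tr_congr B A m n hR.symm, congrFun hR n]

lemma invariant (l : ℕ) (hl : 1 ≤ l) :
    ∀ i, i ≤ 2 * l - 1 →
    (AB {0} {1} (mseq l) i).1 ⊆ Set.Iic (2 ^ (i + 1) - 1) ∧
    (AB {0} {1} (mseq l) i).2 ⊆ Set.Iic (2 ^ (i + 1) - 1) ∧
    (0 ∉ (AB {0} {1} (mseq l) i).2) ∧
    ((2 ^ (i + 1) - 1 : ℕ) ∈ (AB {0} {1} (mseq l) i).1 ↔ Odd i) ∧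
    ((2 ^ (i + 1) - 1 : ℕ) ∈ (AB {0} {1} (mseq l) i).2 ↔ Even i) ∧
    R (AB {0} {1} (mseq l) i).1 = R (AB {0} {1} (mseq l) i).2 := by
  intro i
  induction i with
  | zero =>
    intro _
    refine ⟨?_, ?_, ?_, ?_, ?_, ?_⟩
    · intro x hx; simp only [AB, Set.mem_singleton_iff] at hx; simp [hx]
    · intro x hx; simp only [AB, Set.mem_singleton_iff] at hx; simp [hx]
    · simp [AB]
    · simp only [AB, Set.mem_singleton_iff]
      constructor
      · intro h; omega
      · rintro ⟨k, hk⟩; omega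
    · simp [AB]
    · funext n; rw [show (AB {0} {1} (mseq l) 0).1 = {0} from rfl,
        show (AB {0} {1} (mseq l) 0).2 = {1} from rfl, R_singleton, R_singleton]
  | succ i ih =>
    intro hi
    have hi' : i ≤ 2 * l - 1 := by omega
    obtain ⟨hA1, hB1, h0, hAtop, hBtop, hR⟩ := ih hi'
    have hm : mseq l i = 2 ^ (i + 1) := by
      unfold mseq; rw [if_pos (by omega)]
    have h1 : 1 ≤ 2 ^ (i + 1) := Nat.one_le_two_pow
    have h2 : (2 : ℕ) ^ (i + 2) = 2 * 2 ^ (i + 1) := by ring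
    set A := (AB {0} {1} (mseq l) i).1 with hAdef
    set B := (AB {0} {1} (mseq l) i).2 with hBdef
    have hAB1 : (AB {0} {1} (mseq l) (i + 1)).1 = A ∪ tr (2 ^ (i + 1)) B := by
      simp only [AB, hm]; rfl
    have hAB2 : (AB {0} {1} (mseq l) (i + 1)).2 = B ∪ tr (2 ^ (i + 1)) A := by
      simp only [AB, hm]; rfl
    have hboundA : ∀ x ∈ A, x ≤ 2 ^ (i + 1) - 1 := fun x hx => Set.mem_Iic.1 (hA1 hx)
    have hboundB : ∀ x ∈ B, x ≤ 2 ^ (i + 1) - 1 := fun x hx => Set.mem_Iic.1 (hB1 hx)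
    refine ⟨?_, ?_, ?_, ?_, ?_, ?_⟩
    · rw [hAB1]
      rintro x (hx | hx)
      · exact Set.mem_Iic.2 (by have := hboundA x hx; omega)
      · obtain ⟨b, hb, hbe⟩ := mem_tr.1 hx
        exact Set.mem_Iic.2 (by have := hboundB b hb; omega)
    · rw [hAB2]
      rintro x (hx | hx)
      · exact Set.mem_Iic.2 (by have := hboundB x hx; omega)
      · obtain ⟨a, ha, hae⟩ := mem_tr.1 hx
        exact Set.mem_Iic.2 (by have := hboundA a ha; omega)
    · rw [hAB2]
      rintro (hx | hx)
      · exact h0 hx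
      · obtain ⟨a, ha, hae⟩ := mem_tr.1 hx
        omega
    · rw [hAB1]
      constructor
      · rintro (hx | hx)
        · exact absurd (hboundA _ hx) (by omega)
        · obtain ⟨b, hb, hbe⟩ := mem_tr.1 hx
          have hb' : b = 2 ^ (i + 1) - 1 := by omega
          subst hb'
          exact (hBtop.1 hb).add_one
      · intro h
        have hev : Even i := by
          rcases h with ⟨k, hk⟩; exact ⟨k, by omega⟩
        exact Or.inr (mem_tr.2 ⟨2 ^ (i + 1) - 1, hBtop.2 hev, by omega⟩)
    · rw [hAB2]
      constructor
      · rintro (hx | hx)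
        · exact absurd (hboundB _ hx) (by omega)
        · obtain ⟨a, ha, hae⟩ := mem_tr.1 hx
          have ha' : a = 2 ^ (i + 1) - 1 := by omega
          subst ha'
          obtain ⟨k, hk⟩ := hAtop.1 ha
          exact ⟨k + 1, by omega⟩
      · intro h
        have hodd : Odd i := by
          rcases h with ⟨k, hk⟩; exact ⟨k - 1, by omega⟩
        exact Or.inr (mem_tr.2 ⟨2 ^ (i + 1) - 1, hAtop.2 hodd, by omega⟩)
    · rw [hAB1, hAB2]
      apply step_lemma
      · intro a ha b hb
        have := hboundA a ha; omega
      · intro b hb a ha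
        have := hboundB b hb; omega
      · exact hR

theorem stmt_19 (l : ℕ) (hl : 1 ≤ l) :
    R (AB {0} {1} (mseq l) (2 * l)).1 = R (AB {0} {1} (mseq l) (2 * l)).2 := by
  obtain ⟨hA1, hB1, h0, hAtop, hBtop, hR⟩ := invariant l hl (2 * l - 1) le_rfl
  have hm : mseq l (2 * l - 1) = 2 ^ (2 * l) - 1 := by
    unfold mseq; rw [if_neg (by omega), if_pos rfl]
  have hexp : (2 * l - 1) + 1 = 2 * l := by omega
  have h1 : 1 ≤ 2 ^ (2 * l) := Nat.one_le_two_pow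
  set A := (AB {0} {1} (mseq l) (2 * l - 1)).1 with hAdef
  set B := (AB {0} {1} (mseq l) (2 * l - 1)).2 with hBdef
  have hAB1 : (AB {0} {1} (mseq l) (2 * l)).1 = A ∪ tr (2 ^ (2 * l) - 1) B := by
    rw [← hexp]; simp only [AB]; rw [hm, hexp]
  have hAB2 : (AB {0} {1} (mseq l) (2 * l)).2 = B ∪ tr (2 ^ (2 * l) - 1) A := by
    rw [← hexp]; simp only [AB]; rw [hm, hexp]
  rw [hexp] at hA1 hB1 hBtop
  have hboundA : ∀ x ∈ A, x ≤ 2 ^ (2 * l) - 1 := fun x hx => Set.mem_Iic.1 (hA1 hx)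
  have hboundB : ∀ x ∈ B, x ≤ 2 ^ (2 * l) - 1 := fun x hx => Set.mem_Iic.1 (hB1 hx)
  have hnotev : ¬ Even (2 * l - 1) := by
    rintro ⟨k, hk⟩; omega
  have htopB : (2 ^ (2 * l) - 1 : ℕ) ∉ B := fun h => hnotev (hBtop.1 h)
  rw [hAB1, hAB2]
  apply step_lemma
  · intro a ha b hb
    have hba := hboundA a ha
    have hb0 : b ≠ 0 := fun h => h0 (h ▸ hb)
    omega
  · intro b hb a ha
    have hbb := hboundB b hb
    have hbne : b ≠ 2 ^ (2 * l) - 1 := fun h => htopB (h ▸ hb)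
    omega
  · exact hR
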